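/- Let q > 1 be real and ω ∈ ℂ with ω·conj(ω) = q and |ω + conj(ω)| ≤ q + 1. Then for any w ∈ ℂ with |w| < 1, |(conj(ω) − w)(ω − w)| ≥ |(1 − ωw)(1 − conj(ω)w)|, i.e. the ratio ((conj(ω)−w)(ω−w))/((1−ωw)(1−conj(ω)w)) has modulus strictly greater than 1. -/

import Mathlib

theorem stmt_16 (q : ℝ) (hq : 1 < q) (ω : ℂ) (hprod : ω * (starRingEnd ℂ) ω = (q : ℂ))
    (hsum : ‖ω + (starRingEnd ℂ) ω‖ ≤ q + 1) (w : ℂ) (hw : ‖w‖ < 1)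
    (h1 : 1 - ω * w ≠ 0) (h2 : 1 - (starRingEnd ℂ) ω * w ≠ 0) :
    ‖((starRingEnd ℂ) ω - w) * (ω - w)‖ >
      ‖(1 - ω * w) * (1 - (starRingEnd ℂ) ω * w)‖ := by
  have hns : Complex.normSq ω = q := by
    have h := Complex.mul_conj ω
    rw [hprod] at h
    exact_mod_cast h.symm
  set a := ω.re with ha
  set b := ω.im with hb
  set x := w.re with hx
  set y := w.im with hy
  have hre : a ^ 2 + b ^ 2 = q := by
    rw [← hns]; simp [Complex.normSq_apply, sq, ha, hb]
  have hsum' : |2 * a| ≤ q + 1 := by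
    have h : ω + (starRingEnd ℂ) ω = ((2 * a : ℝ) : ℂ) := by
      rw [Complex.add_conj]
    rwa [h, Complex.norm_real, Real.norm_eq_abs] at hsum
  have hwns : x ^ 2 + y ^ 2 < 1 := by
    have h : Complex.normSq w = ‖w‖ ^ 2 := (Complex.sq_norm w).symm
    have h2 : Complex.normSq w < 1 := by
      rw [h]; nlinarith [norm_nonneg w]
    simpa [Complex.normSq_apply, sq] using h2
  have hxlt : |x| < 1 := by
    rw [abs_lt]; constructor <;> nlinarith [sq_nonneg y]
  have h2x : 2 * |x| < 1 + x ^ 2 := by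
    nlinarith [mul_pos (by linarith : (0:ℝ) < 1 - |x|) (by linarith : (0:ℝ) < 1 - |x|),
      sq_abs x]
  have hT : 4 * a * x < (q + 1) * (1 + x ^ 2 + y ^ 2) := by
    have hb1 : 4 * a * x ≤ |2 * a| * (2 * |x|) := by
      calc 4 * a * x ≤ |4 * a * x| := le_abs_self _
        _ = |2 * a| * (2 * |x|) := by
            rw [show (4:ℝ) * a * x = (2 * a) * (2 * x) by ring, abs_mul, abs_mul,
              abs_two, abs_mul 2 x, abs_two]
    have hb2 : |2 * a| * (2 * |x|) ≤ (q + 1) * (2 * |x|) := by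
      apply mul_le_mul_of_nonneg_right hsum' (by positivity)
    have hb3 : (q + 1) * (2 * |x|) < (q + 1) * (1 + x ^ 2) := by
      apply mul_lt_mul_of_pos_left h2x (by linarith)
    nlinarith [sq_nonneg y]
  have key : Complex.normSq ((1 - ω * w) * (1 - (starRingEnd ℂ) ω * w)) <
      Complex.normSq (((starRingEnd ℂ) ω - w) * (ω - w)) := by
    simp only [Complex.normSq_apply, Complex.mul_re, Complex.mul_im, Complex.sub_re,
      Complex.sub_im, Complex.one_re, Complex.one_im, Complex.conj_re, Complex.conj_im,
      ← ha, ← hb, ← hx, ← hy]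
    have hfac : 0 < (a ^ 2 + b ^ 2 - 1) * (1 - (x ^ 2 + y ^ 2)) *
        ((a ^ 2 + b ^ 2 + 1) * (1 + x ^ 2 + y ^ 2) - 4 * a * x) := by
      rw [hre]
      apply mul_pos (mul_pos (by linarith) (by linarith)) (by linarith)
    nlinarith [hfac]
  calc ‖(1 - ω * w) * (1 - (starRingEnd ℂ) ω * w)‖
      = Real.sqrt (Complex.normSq ((1 - ω * w) * (1 - (starRingEnd ℂ) ω * w))) := by
        rw [Complex.norm_def]
    _ < Real.sqrt (Complex.normSq (((starRingEnd ℂ) ω - w) * (ω - w))) :=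
        Real.sqrt_lt_sqrt (Complex.normSq_nonneg _) key
    _ = ‖((starRingEnd ℂ) ω - w) * (ω - w)‖ := by rw [Complex.norm_def]
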